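/- If μ is a random variable with density Q(μ) = [2μ − √π·e^{μ²}·(1−2μ²)·erf(μ)]·e^{−2μ²} on [0,∞), then its even moments satisfy E[μ^{2n}] = (n!/2^n)·[1 + 2^{n+1}·n·₂F₁(1+n, 1/2; 3/2; −1)]. -/

import Mathlib

open MeasureTheory Real

/-- The error function. -/
noncomputable def erf (x : ℝ) : ℝ := (2 / Real.sqrt π) * ∫ t in (0:ℝ)..x, Real.exp (-t ^ 2)

/-- The Gauss hypergeometric function ₂F₁(a, 1/2; 3/2; z), via its Euler-type integral
representation `∫₀¹ (1 - z t²)^(-a) dt`, which agrees with the analytic continuation of the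
hypergeometric series for negative real argument `z`. -/
noncomputable def hyp2F1half (a z : ℝ) : ℝ := ∫ t in (0:ℝ)..1, (1 - z * t ^ 2) ^ (-a)

/-- The probability density of the sum μ = r + s. -/
noncomputable def Q (μ : ℝ) : ℝ :=
  (2 * μ - Real.sqrt π * Real.exp (μ ^ 2) * (1 - 2 * μ ^ 2) * erf μ) * Real.exp (-2 * μ ^ 2)

open Set Filter Asymptotics


lemma contGauss (a : ℝ) : Continuous fun t : ℝ => Real.exp (-a * t ^ 2) := by continuity

lemma erf_hasDerivAt (x : ℝ) :
    HasDerivAt erf (2 / Real.sqrt π * Real.exp (-x ^ 2)) x := by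
  have hc : Continuous fun t : ℝ => Real.exp (-t ^ 2) := by continuity
  exact ((hc.integral_hasStrictDerivAt 0 x).hasDerivAt).const_mul _

lemma erf_continuous : Continuous erf :=
  continuous_iff_continuousAt.2 fun x => (erf_hasDerivAt x).continuousAt

lemma erf_zero : erf 0 = 0 := by simp [erf]

lemma erf_nonneg' {x : ℝ} (hx : 0 ≤ x) : 0 ≤ erf x :=
  mul_nonneg (by positivity) (intervalIntegral.integral_nonneg hx fun t _ => (Real.exp_pos _).le)

lemma gaussIoi : ∫ x in Ioi (0:ℝ), Real.exp (-x ^ 2) = Real.sqrt π / 2 := by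
  have := integral_gaussian_Ioi 1
  simpa using this

lemma gaussIntOn : IntegrableOn (fun x : ℝ => Real.exp (-x ^ 2)) (Ioi 0) := by
  have := (integrable_exp_neg_mul_sq one_pos).integrableOn (s := Ioi (0:ℝ))
  simpa using this

lemma erf_le_one' {x : ℝ} (hx : 0 ≤ x) : erf x ≤ 1 := by
  have h1 : (∫ t in (0:ℝ)..x, Real.exp (-t ^ 2)) ≤ Real.sqrt π / 2 := by
    rw [intervalIntegral.integral_of_le hx, ← gaussIoi]
    apply setIntegral_mono_set gaussIntOn
    · filter_upwards with t using (Real.exp_pos _).le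
    · exact HasSubset.Subset.eventuallyLE Ioc_subset_Ioi_self
  have hπ : (0:ℝ) < Real.sqrt π := Real.sqrt_pos.2 Real.pi_pos
  calc erf x ≤ (2 / Real.sqrt π) * (Real.sqrt π / 2) := by
        exact mul_le_mul_of_nonneg_left h1 (by positivity)
    _ = 1 := by field_simp

lemma erf_tendsto0 : Tendsto (fun x => ∫ t in (0:ℝ)..x, Real.exp (-t ^ 2)) atTop
    (nhds (Real.sqrt π / 2)) := by
  have h : IntegrableOn (fun x : ℝ => Real.exp (-x ^ 2)) (Ioi 0) := by
    have := (integrable_exp_neg_mul_sq one_pos).integrableOn (s := Ioi (0:ℝ)); simpa using this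
  have := intervalIntegral_tendsto_integral_Ioi 0 h tendsto_id
  have hg : ∫ x in Ioi (0:ℝ), Real.exp (-x ^ 2) = Real.sqrt π / 2 := by
    simpa using integral_gaussian_Ioi 1
  rwa [hg] at this

lemma gauss_tendsto {a : ℝ} (ha : 0 < a) (m : ℕ) :
    Tendsto (fun x : ℝ => x ^ m * Real.exp (-a * x ^ 2)) atTop (nhds 0) := by
  have h1 := rpow_mul_exp_neg_mul_sq_isLittleO_exp_neg ha (m : ℝ)
  have hhalf : Tendsto (fun x : ℝ => (1/2 : ℝ) * x) atTop atTop :=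
    tendsto_id.const_mul_atTop (by norm_num)
  have h2 : Tendsto (fun x : ℝ => Real.exp (-(1/2) * x)) atTop (nhds 0) := by
    have := Real.tendsto_exp_atBot.comp (tendsto_neg_atTop_atBot.comp hhalf)
    simpa [Function.comp_def, neg_mul] using this
  have := h1.isBigO.trans_tendsto h2
  simpa [Real.rpow_natCast] using this

lemma intOn_pow_gauss {a : ℝ} (ha : 0 < a) (m : ℕ) :
    IntegrableOn (fun x : ℝ => x ^ m * Real.exp (-a * x ^ 2)) (Ioi 0) := by
  have hm : (-1:ℝ) < (m:ℝ) := lt_of_lt_of_le (by norm_num) (Nat.cast_nonneg m)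
  have := integrableOn_rpow_mul_exp_neg_mul_sq ha hm
  simpa [Real.rpow_natCast] using this

lemma gauss_hasDerivAt (a x : ℝ) :
    HasDerivAt (fun x : ℝ => Real.exp (-a * x ^ 2)) (-2 * a * x * Real.exp (-a * x ^ 2)) x := by
  have h1 : HasDerivAt (fun x : ℝ => -a * x ^ 2) (-2 * a * x) x := by
    have := (hasDerivAt_pow 2 x).const_mul (-a)
    exact this.congr_deriv (by ring)
  have := h1.exp
  convert this using 1; ring

lemma J_eq {a : ℝ} (ha : 0 < a) (k : ℕ) :
    ∫ x in Ioi (0:ℝ), x ^ (2*k+1) * Real.exp (-a * x ^ 2)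
      = k.factorial / (2 * a ^ (k+1)) := by
  induction k with
  | zero =>
    have hF : ∀ x ∈ Ici (0:ℝ), HasDerivAt (fun x : ℝ => -Real.exp (-a * x ^ 2) / (2*a))
        (x ^ (2*0+1) * Real.exp (-a * x ^ 2)) x := by
      intro x _
      have := ((gauss_hasDerivAt a x).neg).div_const (2*a)
      refine this.congr_deriv ?_
      field_simp
      ring
    have htend : Tendsto (fun x : ℝ => -Real.exp (-a * x ^ 2) / (2*a)) atTop (nhds 0) := by
      have := ((gauss_tendsto ha 0).neg).div_const (2*a)
      simpa using this
    have := integral_Ioi_of_hasDerivAt_of_tendsto' hF (intOn_pow_gauss ha _) htend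
    rw [this]
    simp
    field_simp
  | succ k ih =>
    -- F x = -(1/(2a)) * (x^(2k+2) * exp(-a x^2))
    have hF : ∀ x ∈ Ici (0:ℝ), HasDerivAt
        (fun x : ℝ => -(1/(2*a)) * (x ^ (2*k+2) * Real.exp (-a * x ^ 2)))
        (x ^ (2*k+3) * Real.exp (-a * x ^ 2)
          - ((k+1:ℝ)/a) * (x ^ (2*k+1) * Real.exp (-a * x ^ 2))) x := by
      intro x _
      have h1 := ((hasDerivAt_pow (2*k+2) x).mul (gauss_hasDerivAt a x)).const_mul (-(1/(2*a)))
      refine h1.congr_deriv ?_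
      rw [show 2*k+2-1 = 2*k+1 by omega]
      push_cast
      field_simp
      ring
    have htend : Tendsto (fun x : ℝ => -(1/(2*a)) * (x ^ (2*k+2) * Real.exp (-a * x ^ 2)))
        atTop (nhds 0) := by
      have := (gauss_tendsto ha (2*k+2)).const_mul (-(1/(2*a)))
      simpa using this
    have hint : IntegrableOn (fun x : ℝ => x ^ (2*k+3) * Real.exp (-a * x ^ 2)
        - ((k+1:ℝ)/a) * (x ^ (2*k+1) * Real.exp (-a * x ^ 2))) (Ioi 0) :=
      (intOn_pow_gauss ha _).sub ((intOn_pow_gauss ha _).const_mul _)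
    have h0 := integral_Ioi_of_hasDerivAt_of_tendsto' hF hint htend
    rw [integral_sub (intOn_pow_gauss ha _) ((intOn_pow_gauss ha _).const_mul _),
      integral_const_mul, ih] at h0
    rw [zero_pow (by omega : 2*k+2 ≠ 0)] at h0
    norm_num at h0
    have hx : ∫ x in Ioi (0:ℝ), x ^ (2*k+3) * Real.exp (-a * x ^ 2)
        = ((k+1:ℝ)/a) * ((k.factorial : ℝ) / (2 * a ^ (k+1))) := by simp only [neg_mul]; linarith
    have he : 2*(k+1)+1 = 2*k+3 := by ring
    rw [he, hx, Nat.factorial_succ]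
    push_cast
    field_simp
    ring

noncomputable def gg (k : ℕ) : ℝ := ∫ t in (0:ℝ)..1, ((1 + t ^ 2) ^ (k + 1) : ℝ)⁻¹

lemma gg_zero : gg 0 = π / 4 := by
  have := integral_inv_one_add_sq (a := (0:ℝ)) (b := 1)
  simp only [Real.arctan_one, Real.arctan_zero, sub_zero] at this
  rw [gg]
  simpa using this

lemma cont_inv_pow (k : ℕ) : Continuous fun t : ℝ => ((1 + t ^ 2) ^ (k + 1) : ℝ)⁻¹ := by
  apply Continuous.inv₀ (by continuity)
  intro t; positivity

lemma gg_succ (k : ℕ) :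
    (2*(k:ℝ)+2) * gg (k+1) = (2*(k:ℝ)+1) * gg k + ((2:ℝ)^(k+1))⁻¹ := by
  have hF : ∀ t ∈ uIcc (0:ℝ) 1, HasDerivAt (fun t : ℝ => t * ((1 + t ^ 2) ^ (k + 1) : ℝ)⁻¹)
      ((1-(2*(k:ℝ)+2)) * ((1 + t ^ 2) ^ (k + 1) : ℝ)⁻¹
        + (2*(k:ℝ)+2) * ((1 + t ^ 2) ^ (k + 2) : ℝ)⁻¹) t := by
    intro t _
    have h1 : HasDerivAt (fun t : ℝ => 1 + t ^ 2) (2*t) t := by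
      simpa using (hasDerivAt_pow 2 t).const_add 1
    have h2 : HasDerivAt (fun t : ℝ => ((1 + t ^ 2) ^ (k + 1) : ℝ))
        ((k+1 : ℕ) * (1 + t ^ 2) ^ k * (2*t)) t := by
      have := h1.pow (k+1)
      exact this.congr_deriv (by simp)
    have h3 := h2.inv (by positivity)
    have h4 := (hasDerivAt_id t).mul h3
    refine h4.congr_deriv ?_
    simp only [Pi.inv_apply, id]
    have hne : (1 + t ^ 2 : ℝ) ≠ 0 := by positivity
    push_cast
    field_simp
    ring
  have hint1 : IntervalIntegrable (fun t : ℝ => ((1 + t ^ 2) ^ (k + 1) : ℝ)⁻¹) volume 0 1 :=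
    (cont_inv_pow k).intervalIntegrable 0 1
  have hint2 : IntervalIntegrable (fun t : ℝ => ((1 + t ^ 2) ^ (k + 2) : ℝ)⁻¹) volume 0 1 :=
    (cont_inv_pow (k+1)).intervalIntegrable 0 1
  have h0 := intervalIntegral.integral_eq_sub_of_hasDerivAt hF
    (((hint1.const_mul _).add (hint2.const_mul _)))
  rw [intervalIntegral.integral_add (hint1.const_mul _) (hint2.const_mul _),
    intervalIntegral.integral_const_mul, intervalIntegral.integral_const_mul] at h0
  have e1 : (fun t : ℝ => t * ((1 + t ^ 2) ^ (k + 1) : ℝ)⁻¹) 1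
      - (fun t : ℝ => t * ((1 + t ^ 2) ^ (k + 1) : ℝ)⁻¹) 0 = ((2:ℝ)^(k+1))⁻¹ := by
    norm_num
  rw [e1] at h0
  have : gg k = ∫ t in (0:ℝ)..1, ((1 + t ^ 2) ^ (k + 1) : ℝ)⁻¹ := rfl
  have h2 : gg (k+1) = ∫ t in (0:ℝ)..1, ((1 + t ^ 2) ^ (k + 2) : ℝ)⁻¹ := rfl
  rw [← this, ← h2] at h0
  linarith

lemma erf_tendsto1 : Tendsto _root_.erf atTop (nhds 1) := by
  have h := erf_tendsto0.const_mul (2 / Real.sqrt π)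
  have hπ : (0:ℝ) < Real.sqrt π := Real.sqrt_pos.2 Real.pi_pos
  have : 2 / Real.sqrt π * (Real.sqrt π / 2) = 1 := by field_simp
  rw [this] at h
  exact h
lemma gauss1_hasDerivAt (x : ℝ) :
    HasDerivAt (fun x : ℝ => Real.exp (-x ^ 2)) (-2 * x * Real.exp (-x ^ 2)) x := by
  have := gauss_hasDerivAt 1 x
  simpa using this

lemma intOn_pow_gauss1 (m : ℕ) :
    IntegrableOn (fun x : ℝ => x ^ m * Real.exp (-x ^ 2)) (Ioi 0) := by
  have := intOn_pow_gauss one_pos m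
  simpa using this

lemma intOn_pow_gauss1_erf (m : ℕ) :
    IntegrableOn (fun x : ℝ => x ^ m * Real.exp (-x ^ 2) * erf x) (Ioi 0) := by
  apply (intOn_pow_gauss1 m).mono'
  · exact (((continuous_pow m).mul (by continuity)).mul erf_continuous).aestronglyMeasurable
  · filter_upwards [ae_restrict_mem measurableSet_Ioi] with x hx
    have hx0 : (0:ℝ) ≤ x := le_of_lt hx
    rw [Real.norm_eq_abs, abs_mul, abs_mul, abs_of_nonneg (pow_nonneg hx0 m),
      abs_of_nonneg (Real.exp_pos _).le, abs_of_nonneg (erf_nonneg' hx0)]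
    calc x ^ m * Real.exp (-x ^ 2) * erf x ≤ x ^ m * Real.exp (-x ^ 2) * 1 :=
          mul_le_mul_of_nonneg_left (erf_le_one' hx0) (by positivity)
      _ = x ^ m * Real.exp (-x ^ 2) := by ring

lemma tendsto_pow_gauss1_erf (m : ℕ) :
    Tendsto (fun x : ℝ => x ^ m * Real.exp (-x ^ 2) * erf x) atTop (nhds 0) := by
  have hg : Tendsto (fun x : ℝ => x ^ m * Real.exp (-x ^ 2)) atTop (nhds 0) := by
    have := gauss_tendsto one_pos m; simpa using this
  apply squeeze_zero' ?_ ?_ hg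
  · filter_upwards [eventually_ge_atTop (0:ℝ)] with x hx
    exact mul_nonneg (by positivity) (erf_nonneg' hx)
  · filter_upwards [eventually_ge_atTop (0:ℝ)] with x hx
    calc x ^ m * Real.exp (-x ^ 2) * erf x ≤ x ^ m * Real.exp (-x ^ 2) * 1 :=
          mul_le_mul_of_nonneg_left (erf_le_one' hx) (by positivity)
      _ = x ^ m * Real.exp (-x ^ 2) := by ring

lemma sqrtπ_pos : (0:ℝ) < Real.sqrt π := Real.sqrt_pos.2 Real.pi_pos

lemma H_eq (n : ℕ) : ∫ x in Ioi (0:ℝ), x ^ (2*n) * Real.exp (-x ^ 2) * erf x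
    = (n.factorial : ℝ) * gg n / Real.sqrt π := by
  induction n with
  | zero =>
    have hF : ∀ x ∈ Ici (0:ℝ), HasDerivAt (fun x : ℝ => Real.sqrt π / 4 * erf x ^ 2)
        (x ^ (2*0) * Real.exp (-x ^ 2) * erf x) x := by
      intro x _
      have := ((erf_hasDerivAt x).pow 2).const_mul (Real.sqrt π / 4)
      refine this.congr_deriv ?_
      have hπ := sqrtπ_pos
      field_simp
      ring
    have htend : Tendsto (fun x : ℝ => Real.sqrt π / 4 * erf x ^ 2) atTop
        (nhds (Real.sqrt π / 4)) := by
      have := (erf_tendsto1.pow 2).const_mul (Real.sqrt π / 4)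
      simpa using this
    have h0 := integral_Ioi_of_hasDerivAt_of_tendsto' hF (intOn_pow_gauss1_erf _) htend
    rw [h0]
    rw [erf_zero, gg_zero]
    have hππ : Real.sqrt π * Real.sqrt π = π := Real.mul_self_sqrt Real.pi_pos.le
    have hπ := sqrtπ_pos
    field_simp
    simp [Real.sq_sqrt Real.pi_pos.le]
  | succ n ih =>
    have hexp2 : ∀ x : ℝ, Real.exp (-x ^ 2) * Real.exp (-x ^ 2) = Real.exp (-2 * x ^ 2) := by
      intro x; rw [← Real.exp_add]; ring_nf
    have hF : ∀ x ∈ Ici (0:ℝ), HasDerivAt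
        (fun x : ℝ => -(1/2) * (x ^ (2*n+1) * Real.exp (-x ^ 2) * erf x))
        (x ^ (2*n+2) * Real.exp (-x ^ 2) * erf x
          - ((2*(n:ℝ)+1)/2) * (x ^ (2*n) * Real.exp (-x ^ 2) * erf x)
          - (1 / Real.sqrt π) * (x ^ (2*n+1) * Real.exp (-2 * x ^ 2))) x := by
      intro x _
      have h1 := (((hasDerivAt_pow (2*n+1) x).mul (gauss1_hasDerivAt x)).mul
        (erf_hasDerivAt x)).const_mul (-(1/2 : ℝ))
      refine h1.congr_deriv ?_
      simp only [Pi.mul_apply]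
      rw [show 2*n+1-1 = 2*n by omega]
      rw [← hexp2 x]
      have hπ := sqrtπ_pos
      push_cast
      field_simp
      ring
    have htend : Tendsto (fun x : ℝ => -(1/2) * (x ^ (2*n+1) * Real.exp (-x ^ 2) * erf x))
        atTop (nhds 0) := by
      have := (tendsto_pow_gauss1_erf (2*n+1)).const_mul (-(1/2 : ℝ))
      simpa using this
    have hint : IntegrableOn (fun x : ℝ => x ^ (2*n+2) * Real.exp (-x ^ 2) * erf x
        - ((2*(n:ℝ)+1)/2) * (x ^ (2*n) * Real.exp (-x ^ 2) * erf x)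
        - (1 / Real.sqrt π) * (x ^ (2*n+1) * Real.exp (-2 * x ^ 2))) (Ioi 0) :=
      ((intOn_pow_gauss1_erf _).sub ((intOn_pow_gauss1_erf _).const_mul _)).sub
        ((intOn_pow_gauss two_pos _).const_mul _)
    have h0 := integral_Ioi_of_hasDerivAt_of_tendsto' hF hint htend
    have hB : IntegrableOn (fun x : ℝ =>
        ((2*(n:ℝ)+1)/2) * (x ^ (2*n) * Real.exp (-x ^ 2) * erf x)) (Ioi 0) :=
      (intOn_pow_gauss1_erf (2*n)).const_mul _
    have hC : IntegrableOn (fun x : ℝ =>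
        (1 / Real.sqrt π) * (x ^ (2*n+1) * Real.exp (-2 * x ^ 2))) (Ioi 0) :=
      (intOn_pow_gauss two_pos (2*n+1)).const_mul _
    have hAB : IntegrableOn (fun x : ℝ => x ^ (2*n+2) * Real.exp (-x ^ 2) * erf x
        - ((2*(n:ℝ)+1)/2) * (x ^ (2*n) * Real.exp (-x ^ 2) * erf x)) (Ioi 0) :=
      (intOn_pow_gauss1_erf (2*n+2)).sub hB
    rw [integral_sub hAB hC, integral_sub (intOn_pow_gauss1_erf (2*n+2)) hB,
      integral_const_mul, integral_const_mul, ih, J_eq two_pos n] at h0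
    rw [zero_pow (by omega : 2*n+1 ≠ 0)] at h0
    norm_num at h0
    have key := gg_succ n
    have hπ := sqrtπ_pos
    rw [show 2*(n+1) = 2*n+2 by ring]
    rw [Nat.factorial_succ]
    push_cast
    have hgoal : (∫ x in Ioi (0:ℝ), x ^ (2*n+2) * Real.exp (-x ^ 2) * erf x)
        = (2*(n:ℝ)+1)/2 * ((n.factorial : ℝ) * gg n / Real.sqrt π)
          + (Real.sqrt π)⁻¹ * ((n.factorial : ℝ) / (2 * 2 ^ (n+1))) := by
      linarith
    rw [hgoal]
    have h2 : ((n:ℝ)+1) * (n.factorial : ℝ) * gg (n+1)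
        = (n.factorial : ℝ)/2 * ((2*(n:ℝ)+1) * gg n + ((2:ℝ)^(n+1))⁻¹) := by
      rw [← key]; ring
    rw [h2]
    have h2pow : ((2:ℝ)^(n+1)) ≠ 0 := by positivity
    field_simp
lemma hyp_eq_gg (n : ℕ) : hyp2F1half (1 + n) (-1) = gg n := by
  unfold hyp2F1half gg
  have h : ∀ t : ℝ, (1 - (-1)*t^2 : ℝ) ^ (-(1+(n:ℝ))) = (((1+t^2)^(n+1) : ℝ))⁻¹ := by
    intro t
    have h1 : (1 - (-1)*t^2 : ℝ) = 1 + t^2 := by ring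
    have h2 : (-(1+(n:ℝ))) = -(((n+1 : ℕ) : ℝ)) := by push_cast; ring
    rw [h1, h2, Real.rpow_neg (by positivity), Real.rpow_natCast]
  simp only [h]

theorem stmt_16 (n : ℕ) :
    ∫ μ in Set.Ioi (0:ℝ), μ ^ (2 * n) * Q μ =
      ((n : ℕ).factorial / 2 ^ n) *
        (1 + 2 ^ (n + 1) * n * hyp2F1half (1 + n) (-1)) := by
  have hπ := sqrtπ_pos
  have hpt : ∀ μ : ℝ, μ ^ (2 * n) * Q μ =
      2 * (μ ^ (2*n+1) * Real.exp (-2 * μ ^ 2))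
      - Real.sqrt π * (μ ^ (2*n) * Real.exp (-μ ^ 2) * erf μ)
      + 2 * Real.sqrt π * (μ ^ (2*n+2) * Real.exp (-μ ^ 2) * erf μ) := by
    intro μ
    have hE : Real.exp (μ ^ 2) * Real.exp (-2 * μ ^ 2) = Real.exp (-μ ^ 2) := by
      rw [← Real.exp_add]; ring_nf
    unfold Q
    linear_combination (-Real.sqrt π * μ^(2*n) * (1-2*μ^2) * erf μ) * hE
  have hA : IntegrableOn (fun μ : ℝ => 2 * (μ ^ (2*n+1) * Real.exp (-2 * μ ^ 2))) (Ioi 0) :=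
    (intOn_pow_gauss two_pos (2*n+1)).const_mul 2
  have hB : IntegrableOn (fun μ : ℝ =>
      Real.sqrt π * (μ ^ (2*n) * Real.exp (-μ ^ 2) * erf μ)) (Ioi 0) :=
    (intOn_pow_gauss1_erf (2*n)).const_mul _
  have hC : IntegrableOn (fun μ : ℝ =>
      2 * Real.sqrt π * (μ ^ (2*n+2) * Real.exp (-μ ^ 2) * erf μ)) (Ioi 0) :=
    (intOn_pow_gauss1_erf (2*n+2)).const_mul _
  have hAB : IntegrableOn (fun μ : ℝ => 2 * (μ ^ (2*n+1) * Real.exp (-2 * μ ^ 2))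
      - Real.sqrt π * (μ ^ (2*n) * Real.exp (-μ ^ 2) * erf μ)) (Ioi 0) := hA.sub hB
  calc ∫ μ in Set.Ioi (0:ℝ), μ ^ (2 * n) * Q μ
      = ∫ μ in Set.Ioi (0:ℝ), (2 * (μ ^ (2*n+1) * Real.exp (-2 * μ ^ 2))
          - Real.sqrt π * (μ ^ (2*n) * Real.exp (-μ ^ 2) * erf μ)
          + 2 * Real.sqrt π * (μ ^ (2*n+2) * Real.exp (-μ ^ 2) * erf μ)) := by
        exact setIntegral_congr_fun measurableSet_Ioi fun μ _ => hpt μ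
    _ = ((n.factorial : ℝ) / 2 ^ n) * (1 + 2 ^ (n + 1) * n * gg n) := by
        rw [integral_add hAB hC, integral_sub hA hB, integral_const_mul, integral_const_mul,
          integral_const_mul, J_eq two_pos n, H_eq n,
          show 2*n+2 = 2*(n+1) by ring, H_eq (n+1)]
        have key := gg_succ n
        have cancel : ∀ A : ℝ, Real.sqrt π * (A / Real.sqrt π) = A := fun A => by
          field_simp
        have cancel2 : ∀ A : ℝ, 2 * Real.sqrt π * (A / Real.sqrt π) = 2 * A := fun A => by
          field_simp
        rw [cancel, cancel2, Nat.factorial_succ]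
        push_cast
        have h2pow : ((2:ℝ)^(n+1)) ≠ 0 := by positivity
        have hmul : ((2:ℝ)^n) * ((2:ℝ)^n)⁻¹ = 1 := mul_inv_cancel₀ (by positivity)
        linear_combination ((n.factorial : ℝ)) * key
          - ((n.factorial : ℝ) * (n:ℝ) * gg n * 2) * hmul
    _ = ((n : ℕ).factorial / 2 ^ n) * (1 + 2 ^ (n + 1) * n * hyp2F1half (1 + n) (-1)) := by
        rw [hyp_eq_gg]
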